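/- Let ψ : F^× \ A_F^× → ℂ^× be a Hecke character of a number field F such that at each infinite place v there exist m_v ∈ ℤ_{≤0} and an embedding τ_v with ψ_v(z) = τ_v(z)^{m_v} on the identity component of F_v^×. Then for every finite place v and every uniformizer ϖ_v of F_v, the value ψ_v(ϖ_v) is an algebraic integer. -/

import Mathlib

open NumberField IsDedekindDomain Multiplicative
set_option maxHeartbeats 1000000
set_option synthInstance.maxHeartbeats 400000

open NumberField IsDedekindDomain Multiplicative IsDedekindDomain.HeightOneSpectrum

section Aux
variable {R : Type*} [CommRing R] [IsDedekindDomain R] {K : Type*} [Field K]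
  [Algebra R K] [IsFractionRing R K] (v : HeightOneSpectrum R)

lemma aux_exists_exp {r : R} (hr : r ≠ 0) :
    ∃ e : ℕ, v.intValuation r = ((ofAdd (-(e : ℤ)) : Multiplicative ℤ) : WithZero (Multiplicative ℤ)) := by
  have h0 : v.intValuation r ≠ 0 := by
    rw [intValuation_apply]; exact v.intValuation_ne_zero r hr
  obtain ⟨a, ha⟩ := WithZero.ne_zero_iff_exists.mp h0
  have h1 : v.intValuation r ≤ 1 := by
    rw [intValuation_apply]; exact v.intValuation_le_one r
  rw [← ha] at h1 ⊢
  have h2 : a ≤ 1 := by exact_mod_cast h1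
  refine ⟨(-(a.toAdd)).toNat, ?_⟩
  have ht : a.toAdd ≤ 0 := by rwa [← toAdd_le, toAdd_one] at h2
  congr 1
  rw [Int.toNat_of_nonneg (by omega), neg_neg]
  exact (ofAdd_toAdd a).symm

lemma aux_not_dvd_succ {r : R} {e : ℕ}
    (he : v.intValuation r = ((ofAdd (-(e : ℤ)) : Multiplicative ℤ) : WithZero (Multiplicative ℤ))) :
    ¬ v.asIdeal ^ (e + 1) ∣ Ideal.span {r} := by
  intro hdvd
  have h := (v.intValuation_le_pow_iff_dvd r (e + 1)).mpr hdvd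
  rw [he] at h
  replace h := WithZero.coe_le_coe.mp h
  have h2 : (-((e : ℤ) + 1)) ≥ (-(e : ℤ)) := by
    have := Multiplicative.toAdd_le.mpr h
    simpa using this
  omega

lemma aux_dvd_of_le {r : R} {e : ℕ}
    (he : v.intValuation r ≤ ((ofAdd (-(e : ℤ)) : Multiplicative ℤ) : WithZero (Multiplicative ℤ))) :
    v.asIdeal ^ e ∣ Ideal.span {r} := by
  rw [intValuation_apply] at he
  exact (v.intValuation_le_pow_iff_dvd r e).mp he

/-- denominator can be chosen prime to `v` -/
lemma aux_denom (c : K) (hc : v.valuation K c ≤ 1) :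
    ∃ d s : R, s ∉ v.asIdeal ∧ (algebraMap R K s) * c = algebraMap R K d := by
  obtain ⟨p, q, hq, hpq⟩ := IsFractionRing.div_surjective (A := R) c
  have hq0 : q ≠ 0 := nonZeroDivisors.ne_zero hq
  have hqK : algebraMap R K q ≠ 0 := by
    exact (map_ne_zero_iff _ (IsFractionRing.injective R K)).mpr hq0
  obtain ⟨e, he⟩ := aux_exists_exp v hq0
  -- p has valuation ≤ that of q
  have hvc : v.valuation K c = v.intValuation p / v.intValuation q := by
    rw [← hpq, Valuation.map_div, valuation_of_algebraMap, valuation_of_algebraMap]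
  have hple : v.intValuation p ≤ v.intValuation q := by
    by_cases hp0 : p = 0
    · rw [intValuation_apply, hp0, intValuationDef_zero]; exact zero_le'
    have hq0' : v.intValuation q ≠ 0 := by
      rw [intValuation_apply]; exact v.intValuation_ne_zero q hq0
    rw [hvc] at hc
    exact (div_le_one₀ (lt_of_le_of_ne zero_le' (Ne.symm hq0'))).mp hc
  -- v^e divides span p
  have hpe : v.asIdeal ^ e ∣ Ideal.span {p} := aux_dvd_of_le v (hple.trans he.le)
  -- factor span q = v^e * Q
  obtain ⟨Q, hQ⟩ := aux_dvd_of_le v he.le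
  have hQv : ¬ Q ≤ v.asIdeal := by
    intro hle
    apply aux_not_dvd_succ v he
    obtain ⟨Q', hQ'⟩ := (Ideal.dvd_iff_le).mpr hle
    rw [hQ, hQ', pow_succ]
    exact ⟨Q', by ring⟩
  obtain ⟨s, hsQ, hsv⟩ := SetLike.not_le_iff_exists.mp hQv
  -- q ∣ p * s
  have hdvd : Ideal.span {q} ∣ Ideal.span {p * s} := by
    rw [hQ]
    have h1 : Ideal.span ({p * s} : Set R) = Ideal.span {p} * Ideal.span {s} := by
      rw [Ideal.span_singleton_mul_span_singleton]
    rw [h1]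
    exact mul_dvd_mul hpe (Ideal.dvd_iff_le.mpr ((Ideal.span_singleton_le_iff_mem Q).mpr hsQ))
  have hqps : q ∣ p * s := by
    rw [Ideal.dvd_iff_le] at hdvd
    exact Ideal.mem_span_singleton.mp (hdvd (Ideal.mem_span_singleton_self _))
  obtain ⟨d, hd⟩ := hqps
  refine ⟨d, s, hsv, ?_⟩
  have h2 : (algebraMap R K) s * c = algebraMap R K (p * s) / algebraMap R K q := by
    rw [← hpq, map_mul]; ring
  rw [h2, hd, map_mul, mul_comm, mul_div_assoc, div_self hqK, mul_one]


lemma aux_mem_le {y : R} {n : ℕ} (hy : y ∈ v.asIdeal ^ n) :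
    v.valuation K (algebraMap R K y) ≤
      ((ofAdd (-(n : ℤ)) : Multiplicative ℤ) : WithZero (Multiplicative ℤ)) := by
  rw [valuation_of_algebraMap, intValuation_apply]
  exact (v.intValuation_le_pow_iff_dvd y n).mpr
    (Ideal.dvd_iff_le.mpr ((Ideal.span_singleton_le_iff_mem _).mpr hy))

lemma aux_coprime_pow {s : R} (hs : s ∉ v.asIdeal) (n : ℕ) :
    ∃ t : R, ∃ y ∈ v.asIdeal ^ n, s * t + y = 1 := by
  have hmax : v.asIdeal.IsMaximal := Ideal.IsPrime.isMaximal v.isPrime v.ne_bot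
  obtain ⟨z, i, hi, hzi⟩ := hmax.exists_inv hs
  have hcop : IsCoprime (Ideal.span {s}) v.asIdeal := by
    rw [Ideal.isCoprime_iff_sup_eq, Ideal.eq_top_iff_one]
    refine Submodule.mem_sup.mpr ⟨z * s, ?_, i, hi, hzi⟩
    exact Ideal.mem_span_singleton.mpr ⟨z, mul_comm z s⟩
  have hcop2 : IsCoprime (Ideal.span {s}) (v.asIdeal ^ n) := hcop.pow_right
  rw [Ideal.isCoprime_iff_sup_eq, Ideal.eq_top_iff_one] at hcop2
  obtain ⟨x, hx, y, hy, hxy⟩ := Submodule.mem_sup.mp hcop2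
  obtain ⟨t, rfl⟩ := Ideal.mem_span_singleton.mp hx
  exact ⟨t, y, hy, hxy⟩

lemma aux_approx (c : K) (hc : v.valuation K c ≤ 1) (n : ℕ) :
    ∃ d : R, v.valuation K (c - algebraMap R K d) ≤
      ((ofAdd (-(n : ℤ)) : Multiplicative ℤ) : WithZero (Multiplicative ℤ)) := by
  obtain ⟨d₀, s, hsv, hsc⟩ := aux_denom v c hc
  obtain ⟨t, y, hy, hst⟩ := aux_coprime_pow v hsv n
  refine ⟨d₀ * t, ?_⟩
  have h1 : (1 : K) = algebraMap R K s * algebraMap R K t + algebraMap R K y := by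
    rw [← map_mul, ← map_add, hst, map_one]
  have h2 : c - algebraMap R K (d₀ * t) = c * algebraMap R K y := by
    calc c - algebraMap R K (d₀ * t)
        = c * (algebraMap R K s * algebraMap R K t + algebraMap R K y) -
            algebraMap R K d₀ * algebraMap R K t := by rw [← h1, map_mul]; ring
      _ = (algebraMap R K s * c) * algebraMap R K t + c * algebraMap R K y -
            algebraMap R K d₀ * algebraMap R K t := by ring
      _ = c * algebraMap R K y := by rw [hsc]; ring
  rw [h2, Valuation.map_mul]
  calc v.valuation K c * v.valuation K (algebraMap R K y)
      ≤ 1 * ((ofAdd (-(n : ℤ)) : Multiplicative ℤ) : WithZero (Multiplicative ℤ)) :=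
        mul_le_mul' hc (aux_mem_le v hy)
    _ = _ := one_mul _

lemma aux_pow_sub {L : Type*} [CommRing L] [Valued L (WithZero (Multiplicative ℤ))]
    {x y : L} (hx : Valued.v x ≤ 1) (hy : Valued.v y ≤ 1) (k : ℕ) :
    Valued.v (x ^ k - y ^ k) ≤ Valued.v (x - y) := by
  rw [← geom_sum₂_mul x y k, Valuation.map_mul]
  calc Valued.v (∑ i ∈ Finset.range k, x ^ i * y ^ (k - 1 - i)) * Valued.v (x - y)
      ≤ 1 * Valued.v (x - y) := by
        refine mul_le_mul' (Valuation.map_sum_le _ fun i _ => ?_) le_rfl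
        rw [Valuation.map_mul, Valuation.map_pow, Valuation.map_pow]
        exact mul_le_one' (pow_le_one' hx i) (pow_le_one' hy _)
    _ = Valued.v (x - y) := one_mul _

lemma aux_dense (x : v.adicCompletion K) (hx : Valued.v x ≤ 1) (n : ℕ) :
    ∃ d : R, Valued.v (x - algebraMap R (v.adicCompletion K) d) ≤
      ((ofAdd (-(n : ℤ)) : Multiplicative ℤ) : WithZero (Multiplicative ℤ)) := by
  set γ : (WithZero (Multiplicative ℤ))ˣ :=
    Units.mk0 ((ofAdd (-(n : ℤ)) : Multiplicative ℤ) : WithZero (Multiplicative ℤ))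
      WithZero.coe_ne_zero with hγ
  have hball : {y : v.adicCompletion K | Valued.v (y - x) < (γ : WithZero (Multiplicative ℤ))}
      ∈ nhds x := by
    obtain ⟨π, hπ⟩ := v.valuation_exists_uniformizer K
    have hyv : Valued.v (((π : K) : v.adicCompletion K) ^ n) = (γ : WithZero (Multiplicative ℤ)) := by
      rw [Valuation.map_pow, valuedAdicCompletion_eq_valuation', hπ, hγ, Units.val_mk0,
        ← WithZero.exp_nsmul]
      show WithZero.exp _ = WithZero.exp _
      congr 1
      simp
    have hne : Valued.v.restrict (((π : K) : v.adicCompletion K) ^ n) ≠ 0 :=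
      ((Valuation.restrict_pos_iff _ _).mpr (by rw [hyv]; exact WithZero.zero_lt_coe _)).ne'
    refine Valued.mem_nhds.mpr ⟨Units.mk0 _ hne, fun z hz => ?_⟩
    have hz' : Valued.v.restrict (z - x) < Valued.v.restrict (((π : K) : v.adicCompletion K) ^ n) := hz
    rw [Valuation.restrict_lt_iff, hyv] at hz'
    exact hz'
  have hdense : Dense (Set.range ((↑) : K → v.adicCompletion K)) := by
    have hd := denseRange_algebraMap (R := R) K v
    rw [algebraMap_adicCompletion, Algebra.algebraMap_self, RingHom.coe_id, Function.comp_id] at hd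
    exact hd
  obtain ⟨yy, hy1, c, rfl⟩ := mem_closure_iff_nhds.mp (hdense x) _ hball
  have hc1 : Valued.v ((c : v.adicCompletion K) - x) <
      ((ofAdd (-(n : ℤ)) : Multiplicative ℤ) : WithZero (Multiplicative ℤ)) := hy1
  have hle1 : ((ofAdd (-(n : ℤ)) : Multiplicative ℤ) : WithZero (Multiplicative ℤ)) ≤ 1 := by
    rw [← WithZero.coe_one, WithZero.coe_le_coe]
    rw [← ofAdd_zero]
    exact Multiplicative.ofAdd_le.mpr (by omega)
  have hcoev : ∀ k : K, Valued.v ((k : v.adicCompletion K)) = v.valuation K k := fun k =>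
    valuedAdicCompletion_eq_valuation' v k
  have hcle : v.valuation K c ≤ 1 := by
    rw [← hcoev c]
    have : (c : v.adicCompletion K) = ((c : v.adicCompletion K) - x) + x := by ring
    rw [this]
    exact le_trans (Valuation.map_add _ _ _) (max_le (le_trans hc1.le hle1) hx)
  obtain ⟨d, hd⟩ := aux_approx v c hcle n
  refine ⟨d, ?_⟩
  have hsplit : x - algebraMap R (v.adicCompletion K) d =
      (x - (c : v.adicCompletion K)) +
        ((c - algebraMap R K d : K) : v.adicCompletion K) := by
    have h1 : ((c - algebraMap R K d : K) : v.adicCompletion K) =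
        (c : v.adicCompletion K) - algebraMap R (v.adicCompletion K) d := by
      have h2 : ((c - algebraMap R K d : K) : v.adicCompletion K) =
          algebraMap K (v.adicCompletion K) (c - algebraMap R K d) := by
        rw [algebraMap_adicCompletion]; rfl
      rw [h2, (algebraMap K (v.adicCompletion K)).map_sub, ← IsScalarTower.algebraMap_apply, algebraMap_adicCompletion]; rfl
    rw [h1]; ring
  rw [hsplit]
  refine le_trans (Valuation.map_add _ _ _) (max_le ?_ ?_)
  · have : Valued.v (x - (c : v.adicCompletion K)) = Valued.v ((c : v.adicCompletion K) - x) := by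
      rw [← Valuation.map_neg]; ring_nf
    rw [this]; exact hc1.le
  · rw [hcoev]; exact hd


lemma aux_val_coe_int (d : R) :
    Valued.v (algebraMap R (v.adicCompletion K) d) = v.intValuation d := by
  rw [IsScalarTower.algebraMap_apply R K (v.adicCompletion K)]
  have h1 : algebraMap K (v.adicCompletion K) (algebraMap R K d) =
      ((algebraMap R K d : K) : v.adicCompletion K) := by
    rw [algebraMap_adicCompletion]; rfl
  rw [h1, valuedAdicCompletion_eq_valuation' v (algebraMap R K d), valuation_of_algebraMap]

end Aux

section NF
variable {F : Type*} [Field F] [NumberField F] (v : HeightOneSpectrum (𝓞 F))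

lemma aux_torsion (u : (v.adicCompletion F)ˣ) (hu : Valued.v (u : v.adicCompletion F) = 1)
    (n : ℕ) : ∃ k : ℕ, 0 < k ∧
      Valued.v (((u : v.adicCompletion F)) ^ k - 1) <
        ((ofAdd (-(n : ℤ)) : Multiplicative ℤ) : WithZero (Multiplicative ℤ)) := by
  set N := n + 1 with hN
  have hNlt : ((ofAdd (-(N : ℤ)) : Multiplicative ℤ) : WithZero (Multiplicative ℤ)) <
      ((ofAdd (-(n : ℤ)) : Multiplicative ℤ) : WithZero (Multiplicative ℤ)) := by
    rw [WithZero.coe_lt_coe]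
    exact Multiplicative.ofAdd_lt.mpr (by omega)
  obtain ⟨d, hd⟩ := aux_dense v (u : v.adicCompletion F) hu.le N
  have hdle1 : ((ofAdd (-(N : ℤ)) : Multiplicative ℤ) : WithZero (Multiplicative ℤ)) < 1 := by
    rw [← WithZero.coe_one, WithZero.coe_lt_coe, ← ofAdd_zero]
    exact Multiplicative.ofAdd_lt.mpr (by omega)
  have hdval : Valued.v (algebraMap (𝓞 F) (v.adicCompletion F) d) = 1 := by
    have heq : algebraMap (𝓞 F) (v.adicCompletion F) d =
        (u : v.adicCompletion F) + ((algebraMap (𝓞 F) (v.adicCompletion F) d) -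
          (u : v.adicCompletion F)) := by ring
    rw [heq, Valuation.map_add_eq_of_lt_left, hu]
    rw [Valuation.map_sub_swap, hu]
    exact lt_of_le_of_lt hd hdle1
  have hdint : v.intValuation d = 1 := by rw [← aux_val_coe_int (K := F) v d]; exact hdval
  have hd0 : d ≠ 0 := by
    intro h
    rw [h, intValuation_apply, intValuationDef_zero] at hdint
    simp at hdint
  have hdnotv : d ∉ v.asIdeal := by
    intro hmem
    have : v.intValuationDef d < 1 := (v.intValuation_lt_one_iff_dvd d).mpr
      (Ideal.dvd_iff_le.mpr ((Ideal.span_singleton_le_iff_mem _).mpr hmem))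
    rw [← intValuation_apply, hdint] at this
    exact lt_irrefl _ this
  -- finite unit group of the quotient
  set M : Ideal (𝓞 F) := v.asIdeal ^ N with hM
  have hMbot : M ≠ ⊥ := by
    rw [hM, ← Ideal.zero_eq_bot]
    exact pow_ne_zero N (by rw [Ideal.zero_eq_bot]; exact v.ne_bot)
  letI : Fintype (𝓞 F ⧸ M) := @Fintype.ofFinite _ (Ideal.finiteQuotientOfFreeOfNeBot M hMbot)
  letI : DecidableEq (𝓞 F ⧸ M) := Classical.decEq _
  obtain ⟨t, y, hy, hdty⟩ := aux_coprime_pow v hdnotv N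
  have hmk : (Ideal.Quotient.mk M d) * (Ideal.Quotient.mk M t) = 1 := by
    rw [← map_mul, ← sub_eq_zero, ← map_one (Ideal.Quotient.mk M), ← map_sub]
    rw [Ideal.Quotient.eq_zero_iff_mem]
    have : d * t - 1 = -y := by linear_combination hdty
    rw [this]
    exact M.neg_mem hy
  set du : (𝓞 F ⧸ M)ˣ := Units.mkOfMulEqOne _ _ hmk with hdu
  set k := Fintype.card (𝓞 F ⧸ M)ˣ with hk
  have hkpos : 0 < k := Fintype.card_pos_iff.mpr ⟨1⟩
  have hduk : du ^ k = 1 := pow_card_eq_one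
  have hdk : d ^ k - 1 ∈ M := by
    have h1 : (Ideal.Quotient.mk M (d ^ k)) = Ideal.Quotient.mk M 1 := by
      have : ((du ^ k : (𝓞 F ⧸ M)ˣ) : 𝓞 F ⧸ M) = 1 := by rw [hduk]; rfl
      rw [Units.val_pow_eq_pow_val] at this
      simpa [hdu, map_pow] using this
    exact Ideal.Quotient.eq.mp h1
  refine ⟨k, hkpos, ?_⟩
  have hsplit : (u : v.adicCompletion F) ^ k - 1 =
      ((u : v.adicCompletion F) ^ k - (algebraMap (𝓞 F) (v.adicCompletion F) d) ^ k) +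
        ((algebraMap (𝓞 F) (v.adicCompletion F) d) ^ k - 1) := by ring
  rw [hsplit]
  refine lt_of_le_of_lt (le_trans (Valuation.map_add _ _ _) (max_le ?_ ?_)) hNlt
  · exact le_trans (aux_pow_sub hu.le hdval.le k) hd
  · have h2 : (algebraMap (𝓞 F) (v.adicCompletion F) d) ^ k - 1 =
        algebraMap (𝓞 F) (v.adicCompletion F) (d ^ k - 1) := by
      rw [map_sub, map_pow, map_one]
    rw [h2]; erw [aux_val_coe_int (K := F) v]; rw [intValuation_apply]
    exact (v.intValuation_le_pow_iff_dvd _ N).mpr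
      (Ideal.dvd_iff_le.mpr ((Ideal.span_singleton_le_iff_mem _).mpr hdk))

end NF

lemma aux_ofAdd_pow (h : ℕ) :
    ((ofAdd (-1 : ℤ) : Multiplicative ℤ))^h = (ofAdd (-(h : ℤ)) : Multiplicative ℤ) := by
  rw [← ofAdd_nsmul]
  congr 1
  simp

lemma aux_pow_one_sub {L : Type*} [CommRing L] [Valued L (WithZero (Multiplicative ℤ))]
    {x : L} (hx : Valued.v x ≤ 1) (j : ℕ) :
    Valued.v (x ^ j - 1) ≤ Valued.v (x - 1) := by
  have := aux_pow_sub (y := (1 : L)) hx (by simp) j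
  simpa using this



/-- Integrality of the values of an algebraic Hecke character at uniformizers.
A Hecke character `ψ` of a number field `F` is presented by its local components:
characters `ψf v` of `F_v^×` at the finite places `v`, and a character `ψ∞` of the
units of the archimedean completion `F_∞ = ℝ^{r₁} × ℂ^{r₂}` (the mixed space).
We assume:
* (continuity) the finite components are trivial on an open compact subgroup of
  `∏ O_w^×`, i.e. `ψf v` is trivial on the unit integers for `v` outside a finite set
  `S`, and trivial on a principal congruence neighborhood of `1` for `v ∈ S`;
* (algebraicity at `∞`) there are `m_w ∈ ℤ_{≤0}` with
  `ψ∞(z) = ∏_w τ_w(z)^{m_w}` on the identity component `(F_∞^×)^0`;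
* (triviality on `F^×`) for every `a ∈ F^×` the product of all local components at
  `a` equals `1` (the product over finite places having finite support).
Then for every finite place `v` and every uniformizer `ϖ_v` of `F_v`, the value
`ψf v (ϖ_v)` is an algebraic integer. -/
theorem stmt_13 (F : Type*) [Field F] [NumberField F]
    (ψf : ∀ v : HeightOneSpectrum (𝓞 F), (v.adicCompletion F)ˣ →* ℂˣ)
    (ψinf : (NumberField.mixedEmbedding.mixedSpace F)ˣ →* ℂˣ)
    (m : NumberField.InfinitePlace F → ℤ) (hm : ∀ w, m w ≤ 0)
    (harch : ∀ u : (NumberField.mixedEmbedding.mixedSpace F)ˣ,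
      (∀ wr : {w : NumberField.InfinitePlace F // w.IsReal},
        0 < (u : NumberField.mixedEmbedding.mixedSpace F).1 wr) →
      (ψinf u : ℂ) =
        (∏ᶠ wr : {w : NumberField.InfinitePlace F // w.IsReal},
          (((u : NumberField.mixedEmbedding.mixedSpace F).1 wr : ℂ)) ^ (m wr.1)) *
        ∏ᶠ wc : {w : NumberField.InfinitePlace F // w.IsComplex},
          ((u : NumberField.mixedEmbedding.mixedSpace F).2 wc) ^ (m wc.1))
    (hcont : ∃ S : Finset (HeightOneSpectrum (𝓞 F)),
      (∀ v : HeightOneSpectrum (𝓞 F), v ∉ S → ∀ u : (v.adicCompletion F)ˣ,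
        Valued.v (u : v.adicCompletion F) = 1 → ψf v u = 1) ∧
      (∀ v ∈ S, ∃ n : ℕ, ∀ u : (v.adicCompletion F)ˣ,
        Valued.v ((u : v.adicCompletion F) - 1) <
          ((Multiplicative.ofAdd (-(n : ℤ)) : Multiplicative ℤ) :
            WithZero (Multiplicative ℤ)) → ψf v u = 1))
    (hsupp : ∀ a : Fˣ,
      (Function.mulSupport fun v : HeightOneSpectrum (𝓞 F) =>
        ψf v (Units.map (algebraMap F (v.adicCompletion F)).toMonoidHom a)).Finite)
    (htriv : ∀ a : Fˣ,
      ψinf (Units.map (NumberField.mixedEmbedding F).toMonoidHom a) *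
        ∏ᶠ v : HeightOneSpectrum (𝓞 F),
          ψf v (Units.map (algebraMap F (v.adicCompletion F)).toMonoidHom a) = 1) :
    ∀ v : HeightOneSpectrum (𝓞 F), ∀ ϖ : (v.adicCompletion F)ˣ,
      Valued.v (ϖ : v.adicCompletion F) =
        ((Multiplicative.ofAdd (-1 : ℤ) : Multiplicative ℤ) :
          WithZero (Multiplicative ℤ)) →
      IsIntegral ℤ ((ψf v ϖ : ℂˣ) : ℂ) := by
  classical
  intro v ϖ hϖ
  obtain ⟨S, hS1, hS2⟩ := hcont
  choose nS hnS using hS2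
  set nfun : HeightOneSpectrum (𝓞 F) → ℕ := fun w => if hw : w ∈ S then nS w hw else 0 with hnfun
  have hker : ∀ w : HeightOneSpectrum (𝓞 F), ∀ u : (w.adicCompletion F)ˣ,
      Valued.v (u : w.adicCompletion F) = 1 →
      Valued.v ((u : w.adicCompletion F) - 1) <
        ((ofAdd (-(nfun w : ℤ)) : Multiplicative ℤ) : WithZero (Multiplicative ℤ)) →
      ψf w u = 1 := by
    intro w u h1 h2
    by_cases hw : w ∈ S
    · refine hnS w hw u ?_
      simpa only [hnfun, dif_pos hw] using h2
    · exact hS1 w hw u h1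
  -- Step 1: some power of v is principal
  have hv0 : v.asIdeal ∈ nonZeroDivisors (Ideal (𝓞 F)) :=
    mem_nonZeroDivisors_iff_ne_zero.mpr (by rw [Ideal.zero_eq_bot]; exact v.ne_bot)
  set h : ℕ := Fintype.card (ClassGroup (𝓞 F)) with hh
  have hhpos : 0 < h := Fintype.card_pos
  have hprin : Submodule.IsPrincipal (v.asIdeal ^ h) := by
    have h1 : ClassGroup.mk0 (⟨v.asIdeal, hv0⟩ ^ h) = 1 := by
      rw [map_pow]; exact pow_card_eq_one
    have h2 : (⟨v.asIdeal, hv0⟩ : nonZeroDivisors (Ideal (𝓞 F))) ^ h =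
        ⟨v.asIdeal ^ h, pow_mem hv0 h⟩ := rfl
    rw [h2] at h1
    exact (ClassGroup.mk0_eq_one_iff _).mp h1
  obtain ⟨b, hb⟩ := hprin.principal
  rw [Ideal.submodule_span_eq] at hb
  have hvpow_ne : v.asIdeal ^ h ≠ ⊥ := by
    rw [← Ideal.zero_eq_bot]
    exact pow_ne_zero h (by rw [Ideal.zero_eq_bot]; exact v.ne_bot)
  have hb0 : b ≠ 0 := by
    intro h0
    rw [h0] at hb
    exact hvpow_ne (by rw [hb, Ideal.span_singleton_eq_bot])
  -- v-adic valuation of b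
  have hbv : v.intValuation b =
      ((ofAdd (-(h : ℤ)) : Multiplicative ℤ) : WithZero (Multiplicative ℤ)) := by
    obtain ⟨e, he⟩ := aux_exists_exp v hb0
    have h1 : v.asIdeal ^ e ∣ Ideal.span {b} := aux_dvd_of_le v he.le
    have h2 : ¬ v.asIdeal ^ (e + 1) ∣ Ideal.span {b} := aux_not_dvd_succ v he
    rw [← hb] at h1 h2
    have hanti : StrictAnti (fun x : ℕ => v.asIdeal ^ x) :=
      Ideal.pow_right_strictAnti _ v.ne_bot v.isPrime.ne_top
    have hle : e ≤ h := by
      by_contra hlt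
      push_neg at hlt
      have := hanti hlt
      exact (lt_irrefl _ (lt_of_lt_of_le this (Ideal.dvd_iff_le.mp h1)))
    have hge : ¬ e + 1 ≤ h := by
      intro hle2
      exact h2 (Ideal.dvd_iff_le.mpr (Ideal.pow_le_pow_right hle2))
    have : e = h := by omega
    rw [he, this]
  -- other places: b is a unit
  have hbw : ∀ w : HeightOneSpectrum (𝓞 F), w ≠ v → w.intValuation b = 1 := by
    intro w hwv
    have hnd : ¬ w.asIdeal ∣ Ideal.span {b} := by
      rw [← hb]
      intro hdvd
      have hwp : Prime w.asIdeal := Ideal.prime_of_isPrime w.ne_bot w.isPrime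
      have h3 : w.asIdeal ∣ v.asIdeal := hwp.dvd_of_dvd_pow hdvd
      have hvmax : v.asIdeal.IsMaximal := Ideal.IsPrime.isMaximal v.isPrime v.ne_bot
      have : v.asIdeal = w.asIdeal := hvmax.eq_of_le w.isPrime.ne_top (Ideal.dvd_iff_le.mp h3)
      exact hwv (IsDedekindDomain.HeightOneSpectrum.ext this.symm)
    have hle := w.intValuation_le_one b
    rcases lt_or_eq_of_le hle with hlt | heq
    · exact absurd ((w.intValuation_lt_one_iff_dvd b).mp hlt) hnd
    · rw [intValuation_apply]
      exact heq
  have hbnotw : ∀ w ∈ S.erase v, b ∉ w.asIdeal := by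
    intro w hw hmem
    have hwv : w ≠ v := (Finset.mem_erase.mp hw).1
    have : w.intValuationDef b < 1 := (w.intValuation_lt_one_iff_dvd b).mpr
      (Ideal.dvd_iff_le.mpr ((Ideal.span_singleton_le_iff_mem _).mpr hmem))
    rw [← intValuation_apply, hbw w hwv] at this
    exact lt_irrefl _ this
  -- units and valuations in the completion at v
  have hbF0 : algebraMap (𝓞 F) F b ≠ 0 :=
    (map_ne_zero_iff _ (IsFractionRing.injective (𝓞 F) F)).mpr hb0
  set bU : Fˣ := Units.mk0 (algebraMap (𝓞 F) F b) hbF0 with hbU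
  set bUv : (v.adicCompletion F)ˣ :=
    Units.map (algebraMap F (v.adicCompletion F)).toMonoidHom bU with hbUv
  have hcoe_int : ∀ (w : HeightOneSpectrum (𝓞 F)) (r : 𝓞 F),
      algebraMap F (w.adicCompletion F) (algebraMap (𝓞 F) F r) =
        algebraMap (𝓞 F) (w.adicCompletion F) r := by
    intro w r
    rw [IsScalarTower.algebraMap_apply (𝓞 F) F (w.adicCompletion F)]
  have hval_bUv : Valued.v (bUv : v.adicCompletion F) =
      ((ofAdd (-(h : ℤ)) : Multiplicative ℤ) : WithZero (Multiplicative ℤ)) := by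
    rw [hbUv, Units.coe_map]
    show Valued.v (algebraMap F (v.adicCompletion F) (bU : F)) = _
    rw [hbU]
    show Valued.v (algebraMap F (v.adicCompletion F) (algebraMap (𝓞 F) F b)) = _
    rw [hcoe_int v b]; erw [aux_val_coe_int (K := F) v b]; rw [hbv]
  have hval_ϖh : Valued.v ((ϖ : v.adicCompletion F) ^ h) =
      ((ofAdd (-(h : ℤ)) : Multiplicative ℤ) : WithZero (Multiplicative ℤ)) := by
    rw [Valuation.map_pow, hϖ, ← WithZero.coe_pow, aux_ofAdd_pow]
  set uu : (v.adicCompletion F)ˣ := bUv * (ϖ ^ h)⁻¹ with huu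
  have huu1 : Valued.v (uu : v.adicCompletion F) = 1 := by
    rw [huu, Units.val_mul, Valuation.map_mul, Units.val_inv_eq_inv_val, Valuation.map_inv,
      Units.val_pow_eq_pow_val, hval_bUv, hval_ϖh]
    exact mul_inv_cancel₀ WithZero.coe_ne_zero
  obtain ⟨k₁, hk₁pos, hk₁⟩ := aux_torsion v uu huu1 (nfun v)
  -- congruence modulus at the places of S other than v
  set T : Finset (HeightOneSpectrum (𝓞 F)) := S.erase v with hT
  set M : Ideal (𝓞 F) := ∏ w ∈ T, w.asIdeal ^ (nfun w + 1) with hM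
  have hMbot : M ≠ ⊥ := by
    rw [hM, ← Ideal.zero_eq_bot]
    refine Finset.prod_ne_zero_iff.mpr fun w _ => ?_
    exact pow_ne_zero _ (by rw [Ideal.zero_eq_bot]; exact w.ne_bot)
  have hcop : IsCoprime (Ideal.span {b}) M := by
    rw [hM]
    refine IsCoprime.prod_right fun w hw => ?_
    refine IsCoprime.pow_right ?_
    have hmax : w.asIdeal.IsMaximal := Ideal.IsPrime.isMaximal w.isPrime w.ne_bot
    obtain ⟨z, i, hi, hzi⟩ := hmax.exists_inv (hbnotw w hw)
    rw [Ideal.isCoprime_iff_sup_eq, Ideal.eq_top_iff_one]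
    refine Submodule.mem_sup.mpr ⟨z * b, ?_, i, hi, hzi⟩
    exact Ideal.mem_span_singleton.mpr ⟨z, mul_comm z b⟩
  letI : Fintype (𝓞 F ⧸ M) := @Fintype.ofFinite _ (Ideal.finiteQuotientOfFreeOfNeBot M hMbot)
  letI : DecidableEq (𝓞 F ⧸ M) := Classical.decEq _
  have hmkb : IsUnit (Ideal.Quotient.mk M b) := by
    rw [Ideal.isCoprime_iff_sup_eq, Ideal.eq_top_iff_one] at hcop
    obtain ⟨x, hx, y, hy, hxy⟩ := Submodule.mem_sup.mp hcop
    obtain ⟨t2, rfl⟩ := Ideal.mem_span_singleton.mp hx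
    refine IsUnit.of_mul_eq_one (Ideal.Quotient.mk M t2) ?_
    rw [← map_mul, ← sub_eq_zero, ← map_one (Ideal.Quotient.mk M), ← map_sub,
      Ideal.Quotient.eq_zero_iff_mem]
    have : b * t2 - 1 = -y := by linear_combination hxy
    rw [this]
    exact M.neg_mem hy
  set k₂ : ℕ := Fintype.card (𝓞 F ⧸ M)ˣ with hk₂
  have hk₂pos : 0 < k₂ := Fintype.card_pos_iff.mpr ⟨1⟩
  have hbk₂ : ∀ j : ℕ, b ^ (k₂ * j) - 1 ∈ M := by
    intro j
    obtain ⟨bu, hbu⟩ := hmkb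
    have h1 : (Ideal.Quotient.mk M (b ^ (k₂ * j))) = Ideal.Quotient.mk M 1 := by
      rw [map_pow, ← hbu, map_one]
      rw [pow_mul, ← Units.val_pow_eq_pow_val, pow_card_eq_one]
      rw [← Units.val_pow_eq_pow_val, one_pow, Units.val_one]
    exact Ideal.Quotient.eq.mp h1
  -- the global element
  set tt : ℕ := 2 * k₁ * k₂ with htt
  have httpos : 0 < tt := by positivity
  set a : 𝓞 F := b ^ tt with ha
  set aU : Fˣ := bU ^ tt with haU
  have haUF : (aU : F) = algebraMap (𝓞 F) F a := by
    rw [haU, Units.val_pow_eq_pow_val, hbU, Units.val_mk0, ha, map_pow]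
  have haM : a - 1 ∈ M := by
    have : tt = k₂ * (2 * k₁) := by ring
    rw [ha, this]
    exact hbk₂ (2 * k₁)
  -- the finprod over finite places collapses to the place v
  have hfin : (∏ᶠ w : HeightOneSpectrum (𝓞 F),
      ψf w (Units.map (algebraMap F (w.adicCompletion F)).toMonoidHom aU)) =
      ψf v (Units.map (algebraMap F (v.adicCompletion F)).toMonoidHom aU) := by
    refine finprod_eq_single _ v ?_
    intro w hwv
    have hcoeval : ((Units.map (algebraMap F (w.adicCompletion F)).toMonoidHom aU :
        (w.adicCompletion F)ˣ) : w.adicCompletion F) =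
        algebraMap (𝓞 F) (w.adicCompletion F) a := by
      rw [Units.coe_map]
      show algebraMap F (w.adicCompletion F) (aU : F) = _
      rw [haUF, hcoe_int w a]
    by_cases hw : w ∈ S
    · refine hnS w hw _ ?_
      rw [hcoeval]
      have h1 : algebraMap (𝓞 F) (w.adicCompletion F) a - 1 =
          algebraMap (𝓞 F) (w.adicCompletion F) (a - 1) := by rw [map_sub, map_one]
      rw [h1]; erw [aux_val_coe_int (K := F) w]
      have hwT : w ∈ T := Finset.mem_erase.mpr ⟨hwv, hw⟩
      have h2 : a - 1 ∈ w.asIdeal ^ (nfun w + 1) := by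
        have hdvd : w.asIdeal ^ (nfun w + 1) ∣ M := by
          rw [hM]; exact Finset.dvd_prod_of_mem _ hwT
        exact (Ideal.dvd_iff_le.mp hdvd) haM
      have h3 : w.intValuation (a - 1) ≤
          ((ofAdd (-(nfun w + 1 : ℕ) : ℤ) : Multiplicative ℤ) : WithZero (Multiplicative ℤ)) := by
        rw [intValuation_apply]
        exact (w.intValuation_le_pow_iff_dvd _ _).mpr
          (Ideal.dvd_iff_le.mpr ((Ideal.span_singleton_le_iff_mem _).mpr h2))
      refine lt_of_le_of_lt h3 ?_
      rw [WithZero.coe_lt_coe]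
      refine Multiplicative.ofAdd_lt.mpr ?_
      have : nfun w = nS w hw := by rw [hnfun]; exact dif_pos hw
      rw [← this]
      push_cast
      omega
    · refine hS1 w hw _ ?_
      rw [hcoeval]; erw [aux_val_coe_int (K := F) w]; rw [ha, map_pow, hbw w hwv, one_pow]
  -- evaluate the component at v
  have hbUv_eq : bUv = uu * ϖ ^ h := by rw [huu, inv_mul_cancel_right]
  have hmapaU : Units.map (algebraMap F (v.adicCompletion F)).toMonoidHom aU = bUv ^ tt := by
    rw [haU, map_pow, hbUv]
  have huut1 : ψf v (uu ^ tt) = 1 := by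
    refine hker v _ ?_ ?_
    · rw [Units.val_pow_eq_pow_val, Valuation.map_pow, huu1, one_pow]
    · rw [Units.val_pow_eq_pow_val]
      have h1 : (uu : v.adicCompletion F) ^ tt =
          ((uu : v.adicCompletion F) ^ k₁) ^ (2 * k₂) := by
        rw [← pow_mul]; congr 1; rw [htt]; ring
      rw [h1]
      have h2 : Valued.v ((uu : v.adicCompletion F) ^ k₁) ≤ 1 := by
        rw [Valuation.map_pow, huu1, one_pow]
      exact lt_of_le_of_lt (aux_pow_one_sub h2 (2 * k₂)) hk₁
  have hψv : ψf v (Units.map (algebraMap F (v.adicCompletion F)).toMonoidHom aU) =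
      ψf v ϖ ^ (h * tt) := by
    rw [hmapaU, hbUv_eq, mul_pow, ← pow_mul, map_mul, huut1, one_mul, map_pow]
  -- the infinite part
  set aUinf : (NumberField.mixedEmbedding.mixedSpace F)ˣ :=
    Units.map (NumberField.mixedEmbedding F).toMonoidHom aU with haUinf
  have hXcoe : (aUinf : NumberField.mixedEmbedding.mixedSpace F) =
      NumberField.mixedEmbedding F (aU : F) := by
    rw [haUinf, Units.coe_map]; rfl
  have hpos : ∀ wr : {w : NumberField.InfinitePlace F // w.IsReal},
      0 < (aUinf : NumberField.mixedEmbedding.mixedSpace F).1 wr := by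
    intro wr
    rw [hXcoe]
    rw [NumberField.mixedEmbedding.mixedEmbedding_apply_isReal]
    rw [haUF, ha, map_pow, map_pow]
    have heven : Even tt := ⟨k₁ * k₂, by rw [htt]; ring⟩
    refine Even.pow_pos heven ?_
    exact (map_ne_zero_iff _ (NumberField.InfinitePlace.embedding_of_isReal wr.2).injective).mpr
      ((map_ne_zero_iff _ (IsFractionRing.injective (𝓞 F) F)).mpr hb0)
  -- notation for the components of the mixed embedding of a
  set xr : {w : NumberField.InfinitePlace F // w.IsReal} → ℝ :=
    fun wr => (aUinf : NumberField.mixedEmbedding.mixedSpace F).1 wr with hxr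
  set xc : {w : NumberField.InfinitePlace F // w.IsComplex} → ℂ :=
    fun wc => (aUinf : NumberField.mixedEmbedding.mixedSpace F).2 wc with hxc
  have hxr0 : ∀ wr, (xr wr : ℂ) ≠ 0 := fun wr =>
    Complex.ofReal_ne_zero.mpr (ne_of_gt (hpos wr))
  have hxc0 : ∀ wc, xc wc ≠ 0 := by
    intro wc
    rw [hxc]
    simp only []
    rw [hXcoe, NumberField.mixedEmbedding.mixedEmbedding_apply_isComplex]
    exact (map_ne_zero_iff _ (wc.1.embedding.injective)).mpr (Units.ne_zero aU)
  have hxrint : ∀ wr, IsIntegral ℤ ((xr wr : ℂ)) := by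
    intro wr
    have h1 : ((xr wr : ℝ) : ℂ) =
        (Complex.ofRealHom.comp (NumberField.InfinitePlace.embedding_of_isReal wr.2))
          (algebraMap (𝓞 F) F a) := by
      rw [hxr]
      simp only []
      rw [hXcoe, NumberField.mixedEmbedding.mixedEmbedding_apply_isReal, haUF]
      rfl
    rw [h1]
    exact IsIntegral.map
      (Complex.ofRealHom.comp (NumberField.InfinitePlace.embedding_of_isReal wr.2)).toIntAlgHom
      (NumberField.RingOfIntegers.isIntegral_coe a)
  have hxcint : ∀ wc, IsIntegral ℤ (xc wc) := by
    intro wc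
    have h1 : xc wc = (wc.1.embedding) (algebraMap (𝓞 F) F a) := by
      rw [hxc]
      simp only []
      rw [hXcoe, NumberField.mixedEmbedding.mixedEmbedding_apply_isComplex, haUF]
    rw [h1]
    exact IsIntegral.map (wc.1.embedding).toIntAlgHom (NumberField.RingOfIntegers.isIntegral_coe a)
  -- the inverse of the archimedean factor
  set P : ℂ := (∏ wr : {w : NumberField.InfinitePlace F // w.IsReal},
      ((xr wr : ℂ)) ^ ((-(m wr.1)).toNat)) *
    ∏ wc : {w : NumberField.InfinitePlace F // w.IsComplex},
      (xc wc) ^ ((-(m wc.1)).toNat) with hP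
  have hterm : ∀ (x : ℂ), x ≠ 0 → ∀ mm : ℤ, mm ≤ 0 → x ^ mm * x ^ ((-mm).toNat) = 1 := by
    intro x hx mm hmm
    rw [← zpow_natCast x ((-mm).toNat), Int.toNat_of_nonneg (by omega), ← zpow_add₀ hx]
    simp
  have hzP : ((ψinf aUinf : ℂˣ) : ℂ) * P = 1 := by
    rw [harch aUinf hpos, hP]
    rw [finprod_eq_prod_of_fintype, finprod_eq_prod_of_fintype]
    have hre : (∏ wr : {w : NumberField.InfinitePlace F // w.IsReal},
          ((xr wr : ℂ)) ^ (m wr.1)) *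
        (∏ wr : {w : NumberField.InfinitePlace F // w.IsReal},
          ((xr wr : ℂ)) ^ ((-(m wr.1)).toNat)) = 1 := by
      rw [← Finset.prod_mul_distrib]
      refine Finset.prod_eq_one fun wr _ => hterm _ (hxr0 wr) _ (hm wr.1)
    have hco : (∏ wc : {w : NumberField.InfinitePlace F // w.IsComplex},
          (xc wc) ^ (m wc.1)) *
        (∏ wc : {w : NumberField.InfinitePlace F // w.IsComplex},
          (xc wc) ^ ((-(m wc.1)).toNat)) = 1 := by
      rw [← Finset.prod_mul_distrib]
      refine Finset.prod_eq_one fun wc _ => hterm _ (hxc0 wc) _ (hm wc.1)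
    calc (∏ wr : {w : NumberField.InfinitePlace F // w.IsReal}, ((xr wr : ℂ)) ^ (m wr.1)) *
          (∏ wc : {w : NumberField.InfinitePlace F // w.IsComplex}, (xc wc) ^ (m wc.1)) *
          ((∏ wr : {w : NumberField.InfinitePlace F // w.IsReal},
            ((xr wr : ℂ)) ^ ((-(m wr.1)).toNat)) *
          ∏ wc : {w : NumberField.InfinitePlace F // w.IsComplex},
            (xc wc) ^ ((-(m wc.1)).toNat))
        = ((∏ wr : {w : NumberField.InfinitePlace F // w.IsReal}, ((xr wr : ℂ)) ^ (m wr.1)) *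
          (∏ wr : {w : NumberField.InfinitePlace F // w.IsReal},
            ((xr wr : ℂ)) ^ ((-(m wr.1)).toNat))) *
          ((∏ wc : {w : NumberField.InfinitePlace F // w.IsComplex}, (xc wc) ^ (m wc.1)) *
          ∏ wc : {w : NumberField.InfinitePlace F // w.IsComplex},
            (xc wc) ^ ((-(m wc.1)).toNat)) := by ring
      _ = 1 := by rw [hre, hco, one_mul]
  have hPint : IsIntegral ℤ P := by
    rw [hP]
    refine IsIntegral.mul ?_ ?_
    · refine Finset.prod_induction _ _ (fun x y hx hy => hx.mul hy) isIntegral_one ?_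
      exact fun wr _ => (hxrint wr).pow _
    · refine Finset.prod_induction _ _ (fun x y hx hy => hx.mul hy) isIntegral_one ?_
      exact fun wc _ => (hxcint wc).pow _
  -- combine with the product formula
  have hmain : ψinf aUinf * ψf v ϖ ^ (h * tt) = 1 := by
    have := htriv aU
    rw [hfin, hψv, ← haUinf] at this
    exact this
  have hz0 : ((ψinf aUinf : ℂˣ) : ℂ) ≠ 0 := Units.ne_zero _
  have hpowP : ((ψf v ϖ : ℂˣ) : ℂ) ^ (h * tt) = P := by
    refine mul_left_cancel₀ hz0 ?_
    rw [hzP]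
    have : (((ψinf aUinf * ψf v ϖ ^ (h * tt) : ℂˣ)) : ℂ) = (1 : ℂˣ) := by rw [hmain]
    rw [Units.val_mul, Units.val_pow_eq_pow_val] at this
    rw [this]
    rfl
  refine IsIntegral.of_pow (n := h * tt) (by positivity) ?_
  rw [hpowP]
  exact hPint
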